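/- The hypercube Q₄ admits a proper 4-edge-coloring in which every 4-cycle uses all four colors (i.e., Q₄ is edge-girth chromatic). -/

import Mathlib

open SimpleGraph

def cubeGraph (n : ℕ) : SimpleGraph (Fin n → ZMod 2) :=
  SimpleGraph.fromRel (fun x y => hammingDist x y = 1)

def IsProperEdgeColoring {V α : Type*} (G : SimpleGraph V) (c : Sym2 V → α) : Prop :=
  ∀ ⦃e₁ e₂ : Sym2 V⦄, e₁ ∈ G.edgeSet → e₂ ∈ G.edgeSet → e₁ ≠ e₂ →
    (∃ v, v ∈ e₁ ∧ v ∈ e₂) → c e₁ ≠ c e₂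

namespace Q4Aux

abbrev V := Fin 4 → ZMod 2

def enc (x : V) : ℕ :=
  (x 0).val + 2 * (x 1).val + 4 * (x 2).val + 8 * (x 3).val

def dec (n : Fin 16) (k : Fin 4) : ZMod 2 :=
  ((n.val >>> k.val) % 2 : ℕ)

def tbl : Fin 16 → Fin 4 → Fin 4 :=
  ![![0,1,2,3], ![0,2,3,1], ![3,1,0,2], ![3,2,1,0],
    ![1,3,2,0], ![1,0,3,2], ![2,3,0,1], ![2,0,1,3],
    ![2,0,1,3], ![2,3,0,1], ![1,0,3,2], ![1,3,2,0],
    ![3,2,1,0], ![3,1,0,2], ![0,2,3,1], ![0,1,2,3]]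

def dirIdx (d : ℕ) : Fin 4 :=
  if d = 1 then 0 else if d = 2 then 1 else if d = 4 then 2 else 3

def colFun (x y : V) : Fin 4 :=
  tbl ⟨enc (fun k => x k * y k) % 16, Nat.mod_lt _ (by norm_num)⟩ (dirIdx (enc (fun k => x k + y k)))

set_option maxHeartbeats 4000000 in
lemma colFun_symm : ∀ x y : V, colFun x y = colFun y x := by decide

def ec : Sym2 V → Fin 4 := Sym2.lift ⟨colFun, colFun_symm⟩

def unit (i : Fin 4) : V := fun k => if k = i then 1 else 0

set_option maxHeartbeats 4000000 in
lemma proper_aux : ∀ v a b : V,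
    (v ≠ a ∧ (hammingDist v a = 1 ∨ hammingDist a v = 1)) →
    (v ≠ b ∧ (hammingDist v b = 1 ∨ hammingDist b v = 1)) →
    a ≠ b → colFun v a ≠ colFun v b := by decide

set_option maxHeartbeats 4000000 in
lemma adj_unit : ∀ x y : V,
    (x ≠ y ∧ (hammingDist x y = 1 ∨ hammingDist y x = 1)) →
    ∃ i : Fin 4, y = x + unit i := by decide

set_option maxHeartbeats 1000000 in
lemma close_cases : ∀ p q r s : Fin 4, unit p + unit q + unit r + unit s = 0 →
    (p = q ∧ r = s) ∨ (p = r ∧ q = s) ∨ (p = s ∧ q = r) := by decide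

set_option maxHeartbeats 1000000 in
lemma unit_add_self : ∀ p : Fin 4, unit p + unit p = 0 := by decide

set_option maxHeartbeats 1000000 in
lemma dec_surj : ∀ v : V, ∃ n : Fin 16, v = dec n := by decide

set_option maxHeartbeats 16000000 in
lemma key2 : ∀ (n : Fin 16) (p q : Fin 4), p ≠ q → ∀ i : Fin 4,
    colFun (dec n) (dec n + unit p) = i ∨
    colFun (dec n + unit p) (dec n + unit p + unit q) = i ∨
    colFun (dec n + unit p + unit q) (dec n + unit q) = i ∨
    colFun (dec n + unit q) (dec n) = i := by decide

end Q4Aux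

open Q4Aux

/-- `Q₄` admits a proper 4-edge-coloring in which every 4-cycle uses all four colors. -/
theorem Q4_edge_girth_chromatic :
    ∃ c : Sym2 (Fin 4 → ZMod 2) → Fin 4,
      IsProperEdgeColoring (cubeGraph 4) c ∧
      ∀ (v : Fin 4 → ZMod 2) (w : (cubeGraph 4).Walk v v),
        w.IsCycle → w.length = 4 → ∀ i : Fin 4, ∃ e ∈ w.edges, c e = i := by
  refine ⟨ec, ?_, ?_⟩
  · -- properness
    intro e₁ e₂ h₁ h₂ hne ⟨v, hv₁, hv₂⟩
    induction e₁ using Sym2.ind with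
    | _ x₁ y₁ =>
      induction e₂ using Sym2.ind with
      | _ x₂ y₂ =>
        rw [SimpleGraph.mem_edgeSet, cubeGraph, SimpleGraph.fromRel_adj] at h₁ h₂
        rw [Sym2.mem_iff] at hv₁ hv₂
        obtain rfl | rfl := hv₁ <;> obtain rfl | rfl := hv₂
        · exact fun h => proper_aux _ _ _ h₁ h₂ (fun hab => hne (by rw [hab])) h
        · rw [Sym2.eq_swap (a := x₂)] at hne ⊢
          refine fun h => proper_aux _ _ _ h₁ ⟨h₂.1.symm, h₂.2.symm⟩
            (fun hab => hne (by rw [hab])) ?_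
          simpa [ec, Sym2.lift_mk] using h
        · rw [Sym2.eq_swap (a := x₁)] at hne ⊢
          refine fun h => proper_aux _ _ _ ⟨h₁.1.symm, h₁.2.symm⟩ h₂
            (fun hab => hne (by rw [hab])) ?_
          simpa [ec, Sym2.lift_mk] using h
        · rw [Sym2.eq_swap (a := x₁), Sym2.eq_swap (a := x₂)] at hne ⊢
          refine fun h => proper_aux _ _ _ ⟨h₁.1.symm, h₁.2.symm⟩ ⟨h₂.1.symm, h₂.2.symm⟩
            (fun hab => hne (by rw [hab])) ?_
          simpa [ec, Sym2.lift_mk] using h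
  · intro v w hc hl i
    match w with
    | .nil => simp at hl
    | .cons h1 (.nil) => simp at hl
    | .cons h1 (.cons h2 .nil) => simp at hl
    | .cons h1 (.cons h2 (.cons h3 .nil)) => simp at hl
    | .cons h1 (.cons h2 (.cons h3 (.cons h4 (.cons h5 t)))) =>
        simp [Walk.length_cons] at hl
    | .cons (v := b) h1 (.cons (v := c) h2 (.cons (v := d) h3 (.cons h4 .nil))) =>
      rw [cubeGraph, SimpleGraph.fromRel_adj] at h1 h2 h3 h4
      obtain ⟨p, rfl⟩ := adj_unit _ _ h1
      obtain ⟨q, rfl⟩ := adj_unit _ _ h2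
      obtain ⟨r, rfl⟩ := adj_unit _ _ h3
      obtain ⟨s, hs⟩ := adj_unit _ _ h4
      have hnd := hc.2
      simp only [Walk.support_cons, Walk.support_nil, List.tail_cons,
        List.nodup_cons, List.mem_cons, List.mem_singleton, List.not_mem_nil,
        not_or] at hnd
      have hbd : v + unit p ≠ v + unit p + unit q + unit r := hnd.1.2.1
      have hcv : v ≠ v + unit p + unit q := fun h => hnd.2.1.2.1 h.symm
      have hsum : unit p + unit q + unit r + unit s = 0 := by
        have : v + (unit p + unit q + unit r + unit s) = v + 0 := by
          rw [add_zero]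
          simp only [← add_assoc]
          exact hs.symm
        exact add_left_cancel this
      rcases close_cases p q r s hsum with ⟨hpq, hrs⟩ | ⟨hpr, hqs⟩ | ⟨hps, hqr⟩
      · exfalso
        apply hcv
        subst hpq
        rw [add_assoc, unit_add_self, add_zero]
      · subst hpr; subst hqs
        have hpq : p ≠ q := by
          intro h; subst h
          apply hcv
          rw [add_assoc, unit_add_self, add_zero]
        have hd : v + unit p + unit q + unit p = v + unit q := by
          have : unit p + unit q + unit p = unit q := by
            rw [add_comm (unit p) (unit q), add_assoc, unit_add_self, add_zero]
          rw [add_assoc, add_assoc, ← add_assoc (unit p), this]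
        obtain ⟨n, rfl⟩ := dec_surj v
        rcases key2 n p q hpq i with h | h | h | h
        · exact ⟨s(dec n, dec n + unit p), by simp [Walk.edges_cons], by simpa [ec] using h⟩
        · exact ⟨s(dec n + unit p, dec n + unit p + unit q), by simp [Walk.edges_cons],
            by simpa [ec] using h⟩
        · refine ⟨s(dec n + unit p + unit q, dec n + unit p + unit q + unit p),
            by simp [Walk.edges_cons], ?_⟩
          rw [hd]; simpa [ec] using h
        · refine ⟨s(dec n + unit p + unit q + unit p, dec n),
            by simp [Walk.edges_cons], ?_⟩
          rw [hd]; simpa [ec] using h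
      · exfalso
        apply hbd
        subst hps; subst hqr
        rw [add_assoc (v + unit p), unit_add_self, add_zero]
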